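/- Let A ∈ ℝ^{n×d} have a singular value decomposition A = U Σ Vᵀ, let k ≥ 1 be an integer, let ε ∈ (0,1/3], let α ≥ 1, and set m = k + ⌈72k/ε²⌉ − 1; assume m ≤ min(n,d) − 1. Let C ⊆ ℝ^d be a set of k points such that dist²(A^(m),C) ≤ α · dist²(A^(m),C') for every set C' ⊆ ℝ^d of k points. Then dist²(A,C) ≤ α(1+ε) · dist²(A,C*) for every set C* ⊆ ℝ^d of k points; in particular C is an α(1+ε)-approximation for the k-means problem on A. -/

import Mathlib

open Matrix

/-- Identify a plain vector in `Fin d → ℝ` with a point of Euclidean space `ℝ^d`. -/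
noncomputable def toEuc {d : ℕ} (v : Fin d → ℝ) : EuclideanSpace ℝ (Fin d) :=
  (WithLp.equiv 2 (Fin d → ℝ)).symm v

/-- Squared Euclidean distance from a point (given as a row vector) to a set. -/
noncomputable def rowDistSq {d : ℕ} (p : Fin d → ℝ) (C : Set (EuclideanSpace ℝ (Fin d))) : ℝ :=
  (Metric.infDist (toEuc p) C) ^ 2

/-- `dist²(A, C)`: sum of squared Euclidean distances of the rows of `A` to the set `C`. -/
noncomputable def matDistSq {n d : ℕ} (A : Matrix (Fin n) (Fin d) ℝ)
    (C : Set (EuclideanSpace ℝ (Fin d))) : ℝ :=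
  ∑ i, rowDistSq (A i) C

/-- Squared Frobenius norm of a matrix. -/
noncomputable def frobSq {n d : ℕ} (A : Matrix (Fin n) (Fin d) ℝ) : ℝ :=
  ∑ i, ∑ j, (A i j) ^ 2

/-- The rectangular diagonal `n × d` matrix with diagonal entries `σ 0, σ 1, …`. -/
def svdDiag (n d : ℕ) (σ : ℕ → ℝ) : Matrix (Fin n) (Fin d) ℝ :=
  Matrix.of fun i j => if (i : ℕ) = (j : ℕ) then σ (i : ℕ) else 0

/-- The truncation keeping only the first `m` diagonal entries of `svdDiag n d σ`. -/
def svdDiagTrunc (n d m : ℕ) (σ : ℕ → ℝ) : Matrix (Fin n) (Fin d) ℝ :=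
  Matrix.of fun i j => if (i : ℕ) = (j : ℕ) ∧ (i : ℕ) < m then σ (i : ℕ) else 0

open Finset

local notation "⟪" x ", " y "⟫" => @inner ℝ _ _ x y

lemma toEuc_apply {d : ℕ} (v : Fin d → ℝ) (j : Fin d) : toEuc v j = v j := rfl

lemma euc_inner {d : ℕ} (x y : EuclideanSpace ℝ (Fin d)) : ⟪x, y⟫ = ∑ j, x j * y j := by
  simp [PiLp.inner_apply, RCLike.inner_apply]
  exact Finset.sum_congr rfl fun _ _ => mul_comm _ _

lemma euc_normsq {d : ℕ} (x : EuclideanSpace ℝ (Fin d)) : ‖x‖^2 = ∑ j, (x j)^2 := by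
  rw [← real_inner_self_eq_norm_sq, euc_inner]
  simp [sq]

lemma toEuc_sub {d : ℕ} (x y : Fin d → ℝ) : toEuc (x - y) = toEuc x - toEuc y := rfl
lemma toEuc_add {d : ℕ} (x y : Fin d → ℝ) : toEuc (x + y) = toEuc x + toEuc y := rfl

-- G1: columns orthonormal
lemma orth_sum_sq {N : ℕ} (M : Matrix (Fin N) (Fin N) ℝ) (hM : Mᵀ * M = 1) (c : Fin N → ℝ) :
    ∑ j, (∑ l, c l * M j l)^2 = ∑ l, (c l)^2 := by
  have hentry : ∀ l l', ∑ j, M j l * M j l' = if l = l' then (1:ℝ) else 0 := by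
    intro l l'
    have := congrFun (congrFun hM l) l'
    simpa [Matrix.mul_apply, Matrix.one_apply, Matrix.transpose_apply] using this
  calc ∑ j, (∑ l, c l * M j l)^2
      = ∑ j, ∑ l, ∑ l', (c l * M j l) * (c l' * M j l') := by
        simp [sq, Finset.sum_mul_sum]
    _ = ∑ l, ∑ l', (c l * c l') * ∑ j, M j l * M j l' := by
        rw [Finset.sum_comm]
        refine Finset.sum_congr rfl fun l _ => ?_
        rw [Finset.sum_comm]
        refine Finset.sum_congr rfl fun l' _ => ?_
        rw [Finset.mul_sum]
        exact Finset.sum_congr rfl fun j _ => by ring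
    _ = ∑ l, (c l)^2 := by
        simp only [hentry, mul_ite, mul_one, mul_zero]
        refine Finset.sum_congr rfl fun l _ => ?_
        rw [Finset.sum_eq_single l] <;> simp +contextual [sq, eq_comm]

-- H1: sum over Fin N of an ite pinned to value p, constant payload
lemma sum_ite_val {N : ℕ} (p : ℕ) (P : Prop) [Decidable P] (c : ℝ) :
    (∑ t : Fin N, if (t:ℕ) = p ∧ P then c else 0) = if p < N ∧ P then c else 0 := by
  rw [Fin.sum_univ_eq_sum_range (fun q => if q = p ∧ P then c else 0) N]
  by_cases hP : P
  · simp only [hP, and_true]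
    rw [Finset.sum_ite_eq' (Finset.range N) p (fun _ => c)]
    simp [Finset.mem_range]
  · simp [hP]

lemma sum_ite_val' {N : ℕ} (p : ℕ) (c : ℝ) :
    (∑ t : Fin N, if (t:ℕ) = p then c else 0) = if p < N then c else 0 := by
  have h := sum_ite_val (N := N) p True c
  simpa using h

-- H2: square of a pinned ite-sum
lemma sq_sum_ite {N : ℕ} (p : ℕ) (P : ℕ → Prop) [DecidablePred P] (x : Fin N → ℝ) :
    (∑ t : Fin N, if (t:ℕ) = p ∧ P (t:ℕ) then x t else 0)^2
      = ∑ t : Fin N, if (t:ℕ) = p ∧ P (t:ℕ) then (x t)^2 else 0 := by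
  by_cases hp : p < N
  · rw [Finset.sum_eq_single (⟨p, hp⟩ : Fin N), Finset.sum_eq_single (⟨p, hp⟩ : Fin N)]
    · split_ifs <;> simp
    · intro t _ ht
      have : ¬((t:ℕ) = p ∧ P (t:ℕ)) := fun h => ht (Fin.ext h.1)
      simp [this]
    · simp
    · intro t _ ht
      have : ¬((t:ℕ) = p ∧ P (t:ℕ)) := fun h => ht (Fin.ext h.1)
      simp [this]
    · simp
  · rw [Finset.sum_eq_zero, Finset.sum_eq_zero]
    · simp
    · intro t _
      have : ¬((t:ℕ) = p) := fun h => hp (h ▸ t.isLt)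
      simp [this]
    · intro t _
      have : ¬((t:ℕ) = p) := fun h => hp (h ▸ t.isLt)
      simp [this]

-- bridging Fin-filtered sums to range sums (constant-in-index payload through ℕ)
lemma sum_fin_lt_eq_range {N : ℕ} (b : ℕ) (f : ℕ → ℝ) :
    (∑ t ∈ Finset.univ.filter (fun t : Fin N => (t:ℕ) < b), f (t:ℕ))
      = ∑ r ∈ Finset.range (min N b), f r := by
  rw [Finset.sum_filter, Fin.sum_univ_eq_sum_range (fun q => if q < b then f q else 0) N,
    ← Finset.sum_filter]
  congr 1
  ext r
  simp [Finset.mem_range, Nat.lt_min, and_comm]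

-- orthonormal expansion inequality (includes Bessel as the case c = coefficients)
lemma onb_ineq {F : Type*} [NormedAddCommGroup F] [InnerProductSpace ℝ F] {r : ℕ}
    {w : Fin r → F} (hw : Orthonormal ℝ w) (a : F) (c : Fin r → ℝ) :
    ‖a‖^2 - ∑ j, (⟪w j, a⟫)^2 ≤ ‖a - ∑ j, c j • w j‖^2 := by
  have hx : ‖(∑ j, c j • w j : F)‖^2 = ∑ j, (c j)^2 := by
    rw [← real_inner_self_eq_norm_sq, inner_sum]
    refine Finset.sum_congr rfl fun j _ => ?_
    rw [sum_inner, Finset.sum_eq_single j]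
    · have h1 : ⟪w j, w j⟫ = (1:ℝ) := by simpa using orthonormal_iff_ite.mp hw j j
      rw [real_inner_smul_left, real_inner_smul_right, h1]
      ring
    · intro i _ hij
      have h0 : ⟪w i, w j⟫ = (0:ℝ) := by simpa [hij] using orthonormal_iff_ite.mp hw i j
      rw [real_inner_smul_left, real_inner_smul_right, h0]
      ring
    · simp
  have hax : ⟪a, (∑ j, c j • w j : F)⟫ = ∑ j, c j * ⟪w j, a⟫ := by
    rw [inner_sum]
    exact Finset.sum_congr rfl fun j _ => by
      rw [real_inner_smul_right, real_inner_comm]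
  have hexp : ‖a - ∑ j, c j • w j‖^2
      = ‖a‖^2 - 2 * ∑ j, c j * ⟪w j, a⟫ + ∑ j, (c j)^2 := by
    rw [norm_sub_sq_real, hx, hax]
  rw [hexp]
  have : ∑ j, ((c j - ⟪w j, a⟫)^2) ≥ 0 := Finset.sum_nonneg fun j _ => sq_nonneg _
  have hid : ∑ j, ((c j - ⟪w j, a⟫)^2)
      = ∑ j, (c j)^2 - 2 * ∑ j, c j * ⟪w j, a⟫ + ∑ j, (⟪w j, a⟫)^2 := by
    rw [Finset.mul_sum, ← Finset.sum_sub_distrib, ← Finset.sum_add_distrib]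
    exact Finset.sum_congr rfl fun j _ => by ring
  linarith [hid ▸ this]


lemma matDistSq_nonneg {n d : ℕ} (M : Matrix (Fin n) (Fin d) ℝ)
    (C : Set (EuclideanSpace ℝ (Fin d))) : 0 ≤ matDistSq M C :=
  Finset.sum_nonneg fun _ _ => sq_nonneg _

lemma matDistSq_le_assign {n d : ℕ} (M : Matrix (Fin n) (Fin d) ℝ)
    (C : Finset (EuclideanSpace ℝ (Fin d))) (g : Fin n → EuclideanSpace ℝ (Fin d))
    (hg : ∀ i, g i ∈ C) :
    matDistSq M ↑C ≤ ∑ i, ‖toEuc (M i) - g i‖^2 := by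
  refine Finset.sum_le_sum fun i _ => ?_
  rw [← dist_eq_norm]
  have h1 : Metric.infDist (toEuc (M i)) ↑C ≤ dist (toEuc (M i)) (g i) :=
    Metric.infDist_le_dist_of_mem (by exact_mod_cast hg i)
  exact pow_le_pow_left₀ Metric.infDist_nonneg h1 2

lemma exists_assignment {n d : ℕ} (M : Matrix (Fin n) (Fin d) ℝ)
    (C : Finset (EuclideanSpace ℝ (Fin d))) (hC : C.Nonempty) :
    ∃ g : Fin n → EuclideanSpace ℝ (Fin d), (∀ i, g i ∈ C) ∧
      matDistSq M ↑C = ∑ i, ‖toEuc (M i) - g i‖^2 := by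
  have hcomp : IsCompact (C : Set (EuclideanSpace ℝ (Fin d))) := C.finite_toSet.isCompact
  have hne : (C : Set (EuclideanSpace ℝ (Fin d))).Nonempty := by exact_mod_cast hC
  have h : ∀ i : Fin n, ∃ y ∈ C, Metric.infDist (toEuc (M i)) ↑C = dist (toEuc (M i)) y := by
    intro i
    obtain ⟨y, hy, hdy⟩ := hcomp.exists_infDist_eq_dist hne (toEuc (M i))
    exact ⟨y, by exact_mod_cast hy, hdy⟩
  choose g hg hdg using h
  refine ⟨g, hg, Finset.sum_congr rfl fun i _ => ?_⟩
  rw [rowDistSq, hdg i, dist_eq_norm]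

set_option maxHeartbeats 1600000000

/-- dimensionality reduction for `k`-means: with `A = U Σ Vᵀ` an SVD,
`k ≥ 1`, `ε ∈ (0,1/3]`, `α ≥ 1`, `m = k + ⌈72k/ε²⌉ - 1 ≤ min(n,d) - 1`, if the set `C` of
`k` points is an α-approximation for `k`-means on `A^(m)`, then it is an
`α(1+ε)`-approximation for `k`-means on `A`. -/
theorem stmt10 {n d : ℕ} (A : Matrix (Fin n) (Fin d) ℝ)
    (U : Matrix (Fin n) (Fin n) ℝ) (V : Matrix (Fin d) (Fin d) ℝ) (σ : ℕ → ℝ)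
    (hU : Uᵀ * U = 1) (hV : Vᵀ * V = 1)
    (hσ0 : ∀ i, i < min n d → 0 ≤ σ i)
    (hσa : ∀ i i', i ≤ i' → i' < min n d → σ i' ≤ σ i)
    (hA : A = U * svdDiag n d σ * Vᵀ)
    (k : ℕ) (hk : 1 ≤ k)
    (ε : ℝ) (hε0 : 0 < ε) (hε1 : ε ≤ 1 / 3)
    (α : ℝ) (hα : 1 ≤ α)
    (m : ℕ) (hm : m = k + ⌈(72 * k : ℝ) / ε ^ 2⌉₊ - 1) (hm2 : m + 1 ≤ min n d)
    (C : Finset (EuclideanSpace ℝ (Fin d))) (hC : C.card = k)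
    (happrox : ∀ C' : Finset (EuclideanSpace ℝ (Fin d)), C'.card = k →
      matDistSq (U * svdDiagTrunc n d m σ * Vᵀ) (C : Set (EuclideanSpace ℝ (Fin d))) ≤
        α * matDistSq (U * svdDiagTrunc n d m σ * Vᵀ) (C' : Set (EuclideanSpace ℝ (Fin d)))) :
    ∀ Cstar : Finset (EuclideanSpace ℝ (Fin d)), Cstar.card = k →
      matDistSq A (C : Set (EuclideanSpace ℝ (Fin d))) ≤
        α * (1 + ε) * matDistSq A (Cstar : Set (EuclideanSpace ℝ (Fin d))) := by
  classical
  intro Cstar hCstar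
  have hmn : m + 1 ≤ n := le_trans hm2 (min_le_left _ _)
  have hmd : m + 1 ≤ d := le_trans hm2 (min_le_right _ _)
  have hσm0 : 0 ≤ σ m := hσ0 m (by omega)
  set B := U * svdDiagTrunc n d m σ * Vᵀ with hBdef
  set Dm := U * (svdDiag n d σ - svdDiagTrunc n d m σ) * Vᵀ with hDmdef
  have hADm : A = B + Dm := by
    rw [hA, hDmdef, hBdef, Matrix.mul_sub, Matrix.sub_mul]; abel
  set a : Fin n → EuclideanSpace ℝ (Fin d) := fun i => toEuc (A i) with hadef
  set b : Fin n → EuclideanSpace ℝ (Fin d) := fun i => toEuc (B i) with hbdef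
  set e : Fin n → EuclideanSpace ℝ (Fin d) := fun i => toEuc (Dm i) with hedef
  have hab : ∀ i, a i = b i + e i := by
    intro i; rw [hadef, hADm]; rfl
  set v : Fin d → EuclideanSpace ℝ (Fin d) := fun l => toEuc (fun j => V j l) with hvdef
  have hUUT : U * Uᵀ = 1 := mul_eq_one_comm.mp hU
  have hVVT : V * Vᵀ = 1 := mul_eq_one_comm.mp hV
  have haapp : ∀ (i : Fin n) (j : Fin d), a i j = A i j := fun i j => rfl
  have hvapp : ∀ (l j : Fin d), v l j = V j l := fun l j => rfl
  have hvv : ∀ l l' : Fin d, ⟪v l, v l'⟫ = if l = l' then (1:ℝ) else 0 := by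
    intro l l'
    rw [euc_inner]
    have := congrFun (congrFun hV l) l'
    simpa [hvapp, Matrix.mul_apply, Matrix.one_apply, Matrix.transpose_apply, toEuc_apply] using this
  -- entries of B and Dm as V-combinations
  have hUSt : ∀ (i : Fin n) (l : Fin d),
      (U * svdDiagTrunc n d m σ) i l
        = ∑ t : Fin n, if (t:ℕ) = (l:ℕ) ∧ (t:ℕ) < m then U i t * σ (t:ℕ) else 0 := by
    intro i l
    rw [Matrix.mul_apply]
    refine Finset.sum_congr rfl fun t _ => ?_
    simp only [svdDiagTrunc, Matrix.of_apply]
    split_ifs <;> ring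
  have hUR : ∀ (i : Fin n) (l : Fin d),
      (U * (svdDiag n d σ - svdDiagTrunc n d m σ)) i l
        = ∑ t : Fin n, if (t:ℕ) = (l:ℕ) ∧ m ≤ (t:ℕ) then U i t * σ (t:ℕ) else 0 := by
    intro i l
    rw [Matrix.mul_apply]
    refine Finset.sum_congr rfl fun t _ => ?_
    simp only [Matrix.sub_apply, svdDiag, svdDiagTrunc, Matrix.of_apply]
    by_cases h1 : (t:ℕ) = (l:ℕ)
    · by_cases h2 : (t:ℕ) < m
      · rw [if_pos h1, if_pos ⟨h1, h2⟩, if_neg (by omega)]; ring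
      · rw [if_pos h1, if_neg (by tauto), if_pos ⟨h1, by omega⟩]; ring
    · rw [if_neg h1, if_neg (by tauto), if_neg (by tauto)]; ring
  have hUSd : ∀ (i : Fin n) (l : Fin d),
      (U * svdDiag n d σ) i l
        = ∑ t : Fin n, if (t:ℕ) = (l:ℕ) then U i t * σ (t:ℕ) else 0 := by
    intro i l
    rw [Matrix.mul_apply]
    refine Finset.sum_congr rfl fun t _ => ?_
    simp only [svdDiag, Matrix.of_apply]
    split_ifs <;> ring
  have hBentry : ∀ i j, B i j = ∑ l, (U * svdDiagTrunc n d m σ) i l * V j l := by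
    intro i j
    rw [hBdef, Matrix.mul_apply]
    exact Finset.sum_congr rfl fun l _ => by rw [Matrix.transpose_apply]
  have hDmentry : ∀ i j, Dm i j = ∑ l, (U * (svdDiag n d σ - svdDiagTrunc n d m σ)) i l * V j l := by
    intro i j
    rw [hDmdef, Matrix.mul_apply]
    exact Finset.sum_congr rfl fun l _ => by rw [Matrix.transpose_apply]
  have hAentry : ∀ i j, A i j = ∑ l, (U * svdDiag n d σ) i l * V j l := by
    intro i j
    rw [hA, Matrix.mul_apply]
    exact Finset.sum_congr rfl fun l _ => by rw [Matrix.transpose_apply]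
  -- inner products with v of V-combinations
  have hinner_v : ∀ (c : Fin d → ℝ) (l : Fin d),
      ⟪v l, toEuc (fun j => ∑ l', c l' * V j l')⟫ = c l := by
    intro c l
    rw [euc_inner]
    simp only [toEuc_apply]
    calc ∑ j, V j l * ∑ l', c l' * V j l'
        = ∑ j, ∑ l', c l' * (V j l' * V j l) := by
          refine Finset.sum_congr rfl fun j _ => ?_
          rw [Finset.mul_sum]
          exact Finset.sum_congr rfl fun l' _ => by ring
      _ = ∑ l', c l' * ∑ j, V j l' * V j l := by
          rw [Finset.sum_comm]
          exact Finset.sum_congr rfl fun l' _ => by rw [Finset.mul_sum]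
      _ = c l := by
          have hent : ∀ l' l'' : Fin d, ∑ j, V j l' * V j l'' = if l' = l'' then (1:ℝ) else 0 := by
            intro l' l''
            have := congrFun (congrFun hV l') l''
            simpa [Matrix.mul_apply, Matrix.one_apply, Matrix.transpose_apply] using this
          simp only [hent, mul_ite, mul_one, mul_zero]
          simp
  set Fm : Finset (Fin d) := univ.filter (fun l : Fin d => (l:ℕ) < m) with hFm
  set Fn : Finset (Fin d) := univ.filter (fun l : Fin d => (l:ℕ) < n) with hFn
  have hcoefB : ∀ (i : Fin n) (l : Fin d), m ≤ (l:ℕ) → (U * svdDiagTrunc n d m σ) i l = 0 := by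
    intro i l hl
    rw [hUSt]
    refine Finset.sum_eq_zero fun t _ => ?_
    rw [if_neg]
    rintro ⟨h1, h2⟩; omega
  have hbspan : ∀ i, b i = ∑ l ∈ Fm, (U * svdDiagTrunc n d m σ) i l • v l := by
    intro i
    ext j
    have hrhs : (∑ l ∈ Fm, (U * svdDiagTrunc n d m σ) i l • v l) j
        = ∑ l ∈ Fm, (U * svdDiagTrunc n d m σ) i l * V j l := by
      rw [WithLp.ofLp_sum, Finset.sum_apply]
      exact Finset.sum_congr rfl fun l _ => rfl
    rw [hrhs]
    have hlhs : b i j = ∑ l, (U * svdDiagTrunc n d m σ) i l * V j l := hBentry i j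
    rw [hlhs, ← Finset.sum_subset (Finset.subset_univ Fm)]
    intro l _ hl
    have : m ≤ (l:ℕ) := by
      by_contra h
      exact hl (by simp [hFm, Nat.lt_of_not_le h])
    rw [hcoefB i l this, zero_mul]
  have hev : ∀ (i : Fin n) (l : Fin d), (l:ℕ) < m → ⟪e i, v l⟫ = 0 := by
    intro i l hl
    have hDi : Dm i = fun j => ∑ l', (U * (svdDiag n d σ - svdDiagTrunc n d m σ)) i l' * V j l' :=
      funext (hDmentry i)
    rw [real_inner_comm, hedef]
    show ⟪v l, toEuc (Dm i)⟫ = 0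
    rw [hDi, hinner_v, hUR]
    refine Finset.sum_eq_zero fun t _ => ?_
    rw [if_neg]
    rintro ⟨h1, h2⟩; omega
  have hbe : ∀ i, ⟪e i, b i⟫ = 0 := by
    intro i
    rw [hbspan i, inner_sum]
    refine Finset.sum_eq_zero fun l hl => ?_
    rw [real_inner_smul_right, hev i l (by simpa [hFm] using hl), mul_zero]
  -- projection onto span of first m right singular vectors
  set P : EuclideanSpace ℝ (Fin d) → EuclideanSpace ℝ (Fin d) :=
    fun c => ∑ l ∈ Fm, ⟪v l, c⟫ • v l with hP
  have hvP : ∀ (c : EuclideanSpace ℝ (Fin d)), ∀ l ∈ Fm, ⟪v l, c - P c⟫ = 0 := by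
    intro c l hl
    rw [inner_sub_right, hP]
    have : ⟪v l, ∑ l' ∈ Fm, ⟪v l', c⟫ • v l'⟫ = ⟪v l, c⟫ := by
      rw [inner_sum]
      rw [Finset.sum_eq_single_of_mem l hl]
      · rw [real_inner_smul_right, hvv, if_pos rfl, mul_one]
      · intro l' _ hll
        rw [real_inner_smul_right, hvv, if_neg (Ne.symm hll), mul_zero]
    rw [this, sub_self]
  have heP : ∀ (i : Fin n) (c : EuclideanSpace ℝ (Fin d)), ⟪e i, P c⟫ = 0 := by
    intro i c
    rw [hP, inner_sum]
    refine Finset.sum_eq_zero fun l hl => ?_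
    rw [real_inner_smul_right, hev i l (by simpa [hFm] using hl), mul_zero]
  have hPle : ∀ (i : Fin n) (c : EuclideanSpace ℝ (Fin d)), ‖c - P c‖^2 ≤ ‖b i - c‖^2 := by
    intro i c
    have h1 : ⟪b i - P c, c - P c⟫ = 0 := by
      have hdiff : b i - P c = ∑ l ∈ Fm, ((U * svdDiagTrunc n d m σ) i l - ⟪v l, c⟫) • v l := by
        rw [hbspan i, hP, ← Finset.sum_sub_distrib]
        exact Finset.sum_congr rfl fun l _ => by rw [sub_smul]
      rw [hdiff, sum_inner]
      refine Finset.sum_eq_zero fun l hl => ?_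
      rw [real_inner_smul_left, hvP c l hl, mul_zero]
    have hsplit : b i - c = (b i - P c) - (c - P c) := by abel
    have h2 : ‖(b i - P c) - (c - P c)‖^2
        = ‖b i - P c‖^2 - 2*⟪b i - P c, c - P c⟫ + ‖c - P c‖^2 := norm_sub_sq_real _ _
    rw [hsplit, h2, h1]
    nlinarith [sq_nonneg ‖b i - P c‖]
  -- spectral bound for sums of rows of Dm
  have hwS : ∀ S : Finset (Fin n), ‖∑ i ∈ S, e i‖^2 ≤ σ m ^2 * S.card := by
    intro S
    have hwj : ∀ j, (∑ i ∈ S, e i) j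
        = ∑ l, (∑ i ∈ S, (U * (svdDiag n d σ - svdDiagTrunc n d m σ)) i l) * V j l := by
      intro j
      rw [WithLp.ofLp_sum, Finset.sum_apply]
      calc ∑ i ∈ S, e i j
          = ∑ i ∈ S, ∑ l, (U * (svdDiag n d σ - svdDiagTrunc n d m σ)) i l * V j l :=
            Finset.sum_congr rfl fun i _ => hDmentry i j
        _ = ∑ l, ∑ i ∈ S, (U * (svdDiag n d σ - svdDiagTrunc n d m σ)) i l * V j l :=
            Finset.sum_comm
        _ = ∑ l, (∑ i ∈ S, (U * (svdDiag n d σ - svdDiagTrunc n d m σ)) i l) * V j l :=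
            Finset.sum_congr rfl fun l _ => (Finset.sum_mul _ _ _).symm
    have hnorm : ‖∑ i ∈ S, e i‖^2
        = ∑ l, (∑ i ∈ S, (U * (svdDiag n d σ - svdDiagTrunc n d m σ)) i l)^2 := by
      rw [euc_normsq]
      simp only [hwj]
      exact orth_sum_sq V hV _
    have hK : ∀ l : Fin d, (∑ i ∈ S, (U * (svdDiag n d σ - svdDiagTrunc n d m σ)) i l)
        = ∑ t : Fin n, if (t:ℕ) = (l:ℕ) ∧ m ≤ (t:ℕ) then (∑ i ∈ S, U i t) * σ (t:ℕ) else 0 := by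
      intro l
      calc ∑ i ∈ S, (U * (svdDiag n d σ - svdDiagTrunc n d m σ)) i l
          = ∑ i ∈ S, ∑ t : Fin n, (if (t:ℕ) = (l:ℕ) ∧ m ≤ (t:ℕ) then U i t * σ (t:ℕ) else 0) :=
            Finset.sum_congr rfl fun i _ => hUR i l
        _ = ∑ t : Fin n, ∑ i ∈ S, (if (t:ℕ) = (l:ℕ) ∧ m ≤ (t:ℕ) then U i t * σ (t:ℕ) else 0) :=
            Finset.sum_comm
        _ = _ := by
            refine Finset.sum_congr rfl fun t _ => ?_
            split_ifs with h
            · rw [← Finset.sum_mul]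
            · exact Finset.sum_const_zero
    have hKsq : ∀ l : Fin d, (∑ i ∈ S, (U * (svdDiag n d σ - svdDiagTrunc n d m σ)) i l)^2
        = ∑ t : Fin n, if (t:ℕ) = (l:ℕ) ∧ m ≤ (t:ℕ) then ((∑ i ∈ S, U i t) * σ (t:ℕ))^2 else 0 := by
      intro l
      rw [hK l]
      exact sq_sum_ite (l:ℕ) (fun q => m ≤ q) _
    have hswap : ∑ l, (∑ i ∈ S, (U * (svdDiag n d σ - svdDiagTrunc n d m σ)) i l)^2
        = ∑ t : Fin n, if (t:ℕ) < d ∧ m ≤ (t:ℕ) then ((∑ i ∈ S, U i t) * σ (t:ℕ))^2 else 0 := by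
      simp only [hKsq]
      rw [Finset.sum_comm]
      refine Finset.sum_congr rfl fun t _ => ?_
      calc ∑ l : Fin d, (if (t:ℕ) = (l:ℕ) ∧ m ≤ (t:ℕ) then ((∑ i ∈ S, U i t) * σ (t:ℕ))^2 else 0)
          = ∑ l : Fin d, (if (l:ℕ) = (t:ℕ) ∧ m ≤ (t:ℕ) then ((∑ i ∈ S, U i t) * σ (t:ℕ))^2 else 0) :=
            Finset.sum_congr rfl fun l _ => if_congr (and_congr_left' eq_comm) rfl rfl
        _ = _ := sum_ite_val (t:ℕ) (m ≤ (t:ℕ)) _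
    have hbd : ∑ t : Fin n, (if (t:ℕ) < d ∧ m ≤ (t:ℕ) then ((∑ i ∈ S, U i t) * σ (t:ℕ))^2 else 0)
        ≤ σ m ^2 * ∑ t : Fin n, (∑ i ∈ S, U i t)^2 := by
      rw [Finset.mul_sum]
      refine Finset.sum_le_sum fun t _ => ?_
      split_ifs with h
      · have htmin : (t:ℕ) < min n d := lt_min t.isLt h.1
        have h1 : σ (t:ℕ) ≤ σ m := hσa m (t:ℕ) h.2 htmin
        have h0 : 0 ≤ σ (t:ℕ) := hσ0 _ htmin
        rw [mul_pow]
        have hs2 : σ (t:ℕ)^2 ≤ σ m ^2 := by nlinarith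
        calc (∑ i ∈ S, U i t)^2 * σ (t:ℕ)^2 ≤ (∑ i ∈ S, U i t)^2 * σ m ^2 :=
              mul_le_mul_of_nonneg_left hs2 (sq_nonneg _)
          _ = σ m ^2 * (∑ i ∈ S, U i t)^2 := mul_comm _ _
      · positivity
    have hU2 : ∑ t : Fin n, (∑ i ∈ S, U i t)^2 = (S.card : ℝ) := by
      have hind : ∀ t, ∑ i ∈ S, U i t
          = ∑ i : Fin n, (if i ∈ S then (1:ℝ) else 0) * U i t := by
        intro t
        rw [Finset.sum_congr rfl (fun i _ => (ite_mul _ _ _ _ : (if i ∈ S then (1:ℝ) else 0) * U i t = _))]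
        simp [Finset.sum_ite_mem]
      calc ∑ t : Fin n, (∑ i ∈ S, U i t)^2
          = ∑ t : Fin n, (∑ i : Fin n, (if i ∈ S then (1:ℝ) else 0) * Uᵀ t i)^2 := by
            simp only [hind, Matrix.transpose_apply]
        _ = ∑ i : Fin n, (if i ∈ S then (1:ℝ) else 0)^2 := by
            refine orth_sum_sq Uᵀ ?_ _
            rw [Matrix.transpose_transpose]
            exact hUUT
        _ = (S.card : ℝ) := by
            simp [sq, Finset.sum_ite_mem]
    calc ‖∑ i ∈ S, e i‖^2
        = ∑ t : Fin n, (if (t:ℕ) < d ∧ m ≤ (t:ℕ) then ((∑ i ∈ S, U i t) * σ (t:ℕ))^2 else 0) := by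
          rw [hnorm, hswap]
      _ ≤ σ m ^2 * ∑ t : Fin n, (∑ i ∈ S, U i t)^2 := hbd
      _ = σ m ^2 * S.card := by rw [hU2]
  -- lower bound: OPT ≥ (m+1-k) σ_m²
  have hvON : Orthonormal ℝ v := orthonormal_iff_ite.mpr hvv
  have hPars : ∀ x : EuclideanSpace ℝ (Fin d), ∑ l, ⟪v l, x⟫^2 = ‖x‖^2 := by
    intro x
    have h1 : ∀ l, ⟪v l, x⟫ = ∑ j, x j * Vᵀ l j := by
      intro l
      rw [euc_inner]
      exact Finset.sum_congr rfl fun j _ => by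
        rw [Matrix.transpose_apply, hvapp, mul_comm]
    simp only [h1]
    rw [orth_sum_sq Vᵀ (by rw [Matrix.transpose_transpose]; exact hVVT) (fun j => x j),
      euc_normsq]
  have hinner_va : ∀ (i : Fin n) (l : Fin d), ⟪v l, a i⟫ = (U * svdDiag n d σ) i l := by
    intro i l
    have hAi : A i = fun j => ∑ l', (U * svdDiag n d σ) i l' * V j l' := funext (hAentry i)
    rw [hadef]
    show ⟪v l, toEuc (A i)⟫ = _
    rw [hAi, hinner_v]
  have hAF : ∑ i, ‖a i‖^2 = ∑ l ∈ Fn, σ (l:ℕ)^2 := by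
    have h1 : ∀ i : Fin n, ‖a i‖^2 = ∑ l, ((U * svdDiag n d σ) i l)^2 := by
      intro i
      rw [← hPars (a i)]
      exact Finset.sum_congr rfl fun l _ => by rw [hinner_va]
    simp only [h1]
    rw [Finset.sum_comm]
    have h2 : ∀ l : Fin d, ∑ i, ((U * svdDiag n d σ) i l)^2
        = if (l:ℕ) < n then σ (l:ℕ)^2 else 0 := by
      intro l
      have h3 : ∀ i, (U * svdDiag n d σ) i l
          = ∑ t : Fin n, (if (t:ℕ) = (l:ℕ) then σ (t:ℕ) else 0) * U i t := by
        intro i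
        rw [hUSd]
        exact Finset.sum_congr rfl fun t _ => by split_ifs <;> ring
      simp only [h3]
      rw [orth_sum_sq U hU]
      have h4 : ∀ t : Fin n, (if (t:ℕ) = (l:ℕ) then σ (t:ℕ) else 0)^2
          = if (t:ℕ) = (l:ℕ) then σ (l:ℕ)^2 else 0 := by
        intro t
        split_ifs with h
        · rw [h]
        · exact zero_pow two_ne_zero
      simp only [h4]
      exact sum_ite_val' (l:ℕ) (σ (l:ℕ)^2)
    simp only [h2]
    rw [Finset.sum_filter]
  have hAw : ∀ x : EuclideanSpace ℝ (Fin d),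
      ∑ i, ⟪a i, x⟫^2 = ∑ l ∈ Fn, σ (l:ℕ)^2 * ⟪v l, x⟫^2 := by
    intro x
    have h1 : ∀ i : Fin n, ⟪a i, x⟫
        = ∑ t : Fin n, (∑ l : Fin d, if (l:ℕ) = (t:ℕ) then σ (t:ℕ) * ⟪v l, x⟫ else 0) * U i t := by
      intro i
      calc ⟪a i, x⟫ = ∑ j, A i j * x j := by
            rw [euc_inner]
            exact Finset.sum_congr rfl fun j _ => by rw [haapp]
        _ = ∑ j, ∑ l, ((U * svdDiag n d σ) i l * V j l) * x j := by
            refine Finset.sum_congr rfl fun j _ => ?_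
            rw [hAentry i j, Finset.sum_mul]
        _ = ∑ l : Fin d, (U * svdDiag n d σ) i l * ⟪v l, x⟫ := by
            rw [Finset.sum_comm]
            refine Finset.sum_congr rfl fun l _ => ?_
            rw [euc_inner, Finset.mul_sum]
            exact Finset.sum_congr rfl fun j _ => by rw [hvapp]; ring
        _ = ∑ l : Fin d, ∑ t : Fin n, (if (t:ℕ) = (l:ℕ) then (σ (t:ℕ) * ⟪v l, x⟫) * U i t else 0) := by
            refine Finset.sum_congr rfl fun l _ => ?_
            rw [hUSd, Finset.sum_mul]
            exact Finset.sum_congr rfl fun t _ => by split_ifs <;> ring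
        _ = ∑ t : Fin n, ∑ l : Fin d, (if (l:ℕ) = (t:ℕ) then (σ (t:ℕ) * ⟪v l, x⟫) * U i t else 0) := by
            rw [Finset.sum_comm]
            refine Finset.sum_congr rfl fun l _ => Finset.sum_congr rfl fun t _ =>
              if_congr (by rw [eq_comm]) rfl rfl
        _ = _ := by
            refine Finset.sum_congr rfl fun t _ => ?_
            rw [Finset.sum_mul]
            exact Finset.sum_congr rfl fun l _ => by split_ifs <;> ring
    simp only [h1]
    rw [orth_sum_sq U hU]
    have h2 : ∀ t : Fin n, (∑ l : Fin d, if (l:ℕ) = (t:ℕ) then σ (t:ℕ) * ⟪v l, x⟫ else 0)^2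
        = ∑ l : Fin d, (if (l:ℕ) = (t:ℕ) then (σ (t:ℕ) * ⟪v l, x⟫)^2 else 0) := by
      intro t
      have := sq_sum_ite (N := d) (t:ℕ) (fun _ => True) (fun l => σ (t:ℕ) * ⟪v l, x⟫)
      simpa using this
    simp only [h2]
    rw [Finset.sum_comm]
    have h3 : ∀ l : Fin d, ∑ t : Fin n, (if (l:ℕ) = (t:ℕ) then (σ (t:ℕ) * ⟪v l, x⟫)^2 else 0)
        = if (l:ℕ) < n then σ (l:ℕ)^2 * ⟪v l, x⟫^2 else 0 := by
      intro l
      have h4 : ∀ t : Fin n, (if (l:ℕ) = (t:ℕ) then (σ (t:ℕ) * ⟪v l, x⟫)^2 else 0)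
          = if (t:ℕ) = (l:ℕ) then σ (l:ℕ)^2 * ⟪v l, x⟫^2 else 0 := by
        intro t
        by_cases h : (t:ℕ) = (l:ℕ)
        · rw [if_pos h.symm, if_pos h, h, mul_pow]
        · rw [if_neg (fun hh => h hh.symm), if_neg h]
      simp only [h4]
      exact sum_ite_val' (l:ℕ) _
    simp only [h3]
    rw [Finset.sum_filter]
  have hOPTlb : σ m ^2 * ((m:ℝ) + 1 - k) ≤ matDistSq A ↑Cstar := by
    have hCstarne : Cstar.Nonempty := Finset.card_pos.mp (by rw [hCstar]; omega)
    obtain ⟨gS, hgS, hgSeq⟩ := exists_assignment A Cstar hCstarne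
    set W := Submodule.span ℝ (Cstar : Set (EuclideanSpace ℝ (Fin d))) with hWdef
    set r := Module.finrank ℝ W with hrdef
    have hrk : r ≤ k := by
      rw [← hCstar]
      exact finrank_span_finset_le_card Cstar
    set bW := stdOrthonormalBasis ℝ W with hbW
    set w : Fin r → EuclideanSpace ℝ (Fin d) := fun j => (bW j : EuclideanSpace ℝ (Fin d)) with hwdef
    have hwON : Orthonormal ℝ w := by
      rw [orthonormal_iff_ite]
      intro i j
      have h := orthonormal_iff_ite.mp bW.orthonormal i j
      rwa [Submodule.coe_inner] at h
    have hrep : ∀ i : Fin n, ∃ c : Fin r → ℝ, gS i = ∑ j, c j • w j := by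
      intro i
      have hxW : gS i ∈ W := Submodule.subset_span (hgS i)
      refine ⟨fun j => bW.repr ⟨gS i, hxW⟩ j, ?_⟩
      have hsr := bW.sum_repr ⟨gS i, hxW⟩
      have h := congrArg (Submodule.subtype W) hsr
      simp only [map_sum, _root_.map_smul, Submodule.coe_subtype] at h
      exact h.symm
    choose cs hcs using hrep
    have hrow : ∀ i, ‖a i‖^2 - ∑ j, ⟪w j, a i⟫^2 ≤ ‖a i - gS i‖^2 := by
      intro i
      have := onb_ineq hwON (a i) (cs i)
      rwa [← hcs i] at this
    have hsum1 : (∑ i, ‖a i‖^2) - ∑ i, ∑ j, ⟪w j, a i⟫^2 ≤ ∑ i, ‖a i - gS i‖^2 := by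
      rw [← Finset.sum_sub_distrib]
      exact Finset.sum_le_sum fun i _ => hrow i
    -- rewrite the double sum spectrally
    have hdbl : ∑ i, ∑ j, ⟪w j, a i⟫^2 = ∑ l ∈ Fn, σ (l:ℕ)^2 * (∑ j, ⟪w j, v l⟫^2) := by
      rw [Finset.sum_comm]
      calc ∑ j, ∑ i, ⟪w j, a i⟫^2
          = ∑ j, ∑ l ∈ Fn, σ (l:ℕ)^2 * ⟪v l, w j⟫^2 := by
            refine Finset.sum_congr rfl fun j _ => ?_
            rw [← hAw (w j)]
            exact Finset.sum_congr rfl fun i _ => by rw [real_inner_comm]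
        _ = ∑ l ∈ Fn, σ (l:ℕ)^2 * (∑ j, ⟪w j, v l⟫^2) := by
            rw [Finset.sum_comm]
            refine Finset.sum_congr rfl fun l _ => ?_
            rw [Finset.mul_sum]
            exact Finset.sum_congr rfl fun j _ => by rw [real_inner_comm]
    set t : Fin d → ℝ := fun l => ∑ j, ⟪w j, v l⟫^2 with htdef
    have ht1 : ∀ l : Fin d, t l ≤ 1 := by
      intro l
      have h := Orthonormal.sum_inner_products_le (𝕜 := ℝ) (v l) hwON (s := univ)
      have hn : ‖v l‖^2 = 1 := by
        rw [← real_inner_self_eq_norm_sq, hvv, if_pos rfl]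
      rw [hn] at h
      calc t l = ∑ j, ‖⟪w j, v l⟫‖^2 := by
            refine Finset.sum_congr rfl fun j _ => ?_
            rw [Real.norm_eq_abs, sq_abs]
        _ ≤ 1 := h
    have ht0 : ∀ l : Fin d, 0 ≤ t l := fun l => Finset.sum_nonneg fun j _ => sq_nonneg _
    set Fm1 : Finset (Fin d) := univ.filter (fun l : Fin d => (l:ℕ) < m + 1) with hFm1
    have hFm1sub : Fm1 ⊆ Fn := by
      intro l hl
      simp only [hFm1, Finset.mem_filter] at hl
      simp only [hFn, Finset.mem_filter]
      exact ⟨hl.1, by omega⟩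
    have hσl0 : ∀ l ∈ Fn, 0 ≤ σ (l:ℕ) := by
      intro l hl
      simp only [hFn, Finset.mem_filter] at hl
      exact hσ0 _ (lt_min hl.2 l.isLt)
    have hstep1 : ∑ l ∈ Fm1, σ (l:ℕ)^2 * (1 - t l)
        ≤ ∑ l ∈ Fn, σ (l:ℕ)^2 * (1 - t l) := by
      refine Finset.sum_le_sum_of_subset_of_nonneg hFm1sub fun l hl _ => ?_
      exact mul_nonneg (sq_nonneg _) (by linarith [ht1 l])
    have hstep2 : σ m ^2 * ((Fm1.card:ℝ) - ∑ l ∈ Fm1, t l)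
        ≤ ∑ l ∈ Fm1, σ (l:ℕ)^2 * (1 - t l) := by
      have hc : ∑ l ∈ Fm1, ((1:ℝ) - t l) = (Fm1.card:ℝ) - ∑ l ∈ Fm1, t l := by
        rw [Finset.sum_sub_distrib, Finset.sum_const, nsmul_eq_mul, mul_one]
      rw [← hc, Finset.mul_sum]
      refine Finset.sum_le_sum fun l hl => ?_
      have hlm : (l:ℕ) ≤ m := by
        simp only [hFm1, Finset.mem_filter] at hl
        omega
      have hσlm : σ m ≤ σ (l:ℕ) := hσa (l:ℕ) m hlm (lt_min (by omega) (by omega))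
      have hσl0 : 0 ≤ σ (l:ℕ) := hσ0 _ (lt_min (by omega) l.isLt)
      have h1t : 0 ≤ 1 - t l := by linarith [ht1 l]
      have hsq : σ m ^2 ≤ σ (l:ℕ)^2 := by nlinarith
      exact mul_le_mul_of_nonneg_right hsq h1t
    have hcard : (Fm1.card : ℝ) = (m:ℝ) + 1 := by
      have h1 : ∑ l ∈ Fm1, (1:ℝ) = ∑ x ∈ Finset.range (min d (m+1)), (1:ℝ) :=
        sum_fin_lt_eq_range (m+1) (fun _ => (1:ℝ))
      have h2 : min d (m+1) = m+1 := by omega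
      rw [h2] at h1
      simp only [Finset.sum_const, nsmul_eq_mul, mul_one, Finset.card_range] at h1
      rw [h1]
      push_cast
      ring
    have hsumt : ∑ l ∈ Fm1, t l ≤ (k:ℝ) := by
      have hwn : ∀ j : Fin r, ‖w j‖^2 = 1 := by
        intro j
        rw [← real_inner_self_eq_norm_sq]
        simpa using orthonormal_iff_ite.mp hwON j j
      calc ∑ l ∈ Fm1, t l = ∑ j : Fin r, ∑ l ∈ Fm1, ⟪v l, w j⟫^2 := by
            rw [Finset.sum_comm]
            exact Finset.sum_congr rfl fun j _ =>
              Finset.sum_congr rfl fun l _ => by rw [real_inner_comm]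
        _ ≤ ∑ _j : Fin r, (1:ℝ) := by
            refine Finset.sum_le_sum fun j _ => ?_
            have h := Orthonormal.sum_inner_products_le (𝕜 := ℝ) (w j) hvON (s := Fm1)
            rw [hwn j] at h
            calc ∑ l ∈ Fm1, ⟪v l, w j⟫^2 = ∑ l ∈ Fm1, ‖⟪v l, w j⟫‖^2 :=
                  Finset.sum_congr rfl fun l _ => by rw [Real.norm_eq_abs, sq_abs]
              _ ≤ 1 := h
        _ = (r:ℝ) := by simp
        _ ≤ (k:ℝ) := by exact_mod_cast hrk
    calc σ m ^2 * ((m:ℝ) + 1 - k)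
        ≤ σ m ^2 * ((Fm1.card:ℝ) - ∑ l ∈ Fm1, t l) := by
          rw [hcard]
          have := hsumt
          nlinarith
      _ ≤ ∑ l ∈ Fm1, σ (l:ℕ)^2 * (1 - t l) := hstep2
      _ ≤ ∑ l ∈ Fn, σ (l:ℕ)^2 * (1 - t l) := hstep1
      _ = (∑ l ∈ Fn, σ (l:ℕ)^2) - ∑ l ∈ Fn, σ (l:ℕ)^2 * t l := by
          rw [← Finset.sum_sub_distrib]
          exact Finset.sum_congr rfl fun l _ => by ring
      _ = (∑ i, ‖a i‖^2) - ∑ i, ∑ j, ⟪w j, a i⟫^2 := by rw [hAF, hdbl]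
      _ ≤ ∑ i, ‖a i - gS i‖^2 := hsum1
      _ = matDistSq A ↑Cstar := hgSeq.symm
  -- cross-term bound
  have hcross : ∀ (C' : Finset (EuclideanSpace ℝ (Fin d))), C'.card = k →
      ∀ g : Fin n → EuclideanSpace ℝ (Fin d), (∀ i, g i ∈ C') → ∀ γ : ℝ, 0 < γ →
      2 * |∑ i, ⟪e i, g i⟫| ≤ (k:ℝ) * σ m ^2 / γ + γ * ∑ i, ‖b i - g i‖^2 := by
    intro C' hC' g hg γ hγ
    have hfib : ∀ F : Fin n → ℝ, ∑ c ∈ C', ∑ i ∈ univ.filter (fun i => g i = c), F i = ∑ i, F i :=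
      fun F => Finset.sum_fiberwise_of_maps_to (fun i _ => hg i) F
    have key : ∀ c ∈ C', 2 * |∑ i ∈ univ.filter (fun i => g i = c), ⟪e i, g i⟫|
        ≤ σ m ^2 / γ + γ * ∑ i ∈ univ.filter (fun i => g i = c), ‖b i - g i‖^2 := by
      intro c hc
      set S := univ.filter (fun i : Fin n => g i = c) with hSdef
      have hsum : ∑ i ∈ S, ⟪e i, g i⟫ = ⟪∑ i ∈ S, e i, c - P c⟫ := by
        rw [sum_inner]
        refine Finset.sum_congr rfl fun i hi => ?_
        have hgi : g i = c := (Finset.mem_filter.mp hi).2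
        rw [hgi, inner_sub_right, heP i c, sub_zero]
      by_cases hempty : S.card = 0
      · rw [hsum, Finset.card_eq_zero.mp hempty]
        simp only [Finset.sum_empty]
        rw [show ⟪(0 : EuclideanSpace ℝ (Fin d)), c - P c⟫ = (0:ℝ) from inner_zero_left _]
        rw [abs_zero, mul_zero]
        positivity
      · have hN1 : 1 ≤ (S.card:ℝ) := by exact_mod_cast Nat.one_le_iff_ne_zero.mpr hempty
        have hXY : |⟪∑ i ∈ S, e i, c - P c⟫| ≤ ‖∑ i ∈ S, e i‖ * ‖c - P c‖ :=
          abs_real_inner_le_norm _ _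
        have hX2 : ‖∑ i ∈ S, e i‖^2 ≤ σ m ^2 * (S.card:ℝ) := hwS S
        have hY2 : (S.card:ℝ) * ‖c - P c‖^2 ≤ ∑ i ∈ S, ‖b i - g i‖^2 := by
          calc (S.card:ℝ) * ‖c - P c‖^2 = ∑ _i ∈ S, ‖c - P c‖^2 := by
                rw [Finset.sum_const, nsmul_eq_mul]
            _ ≤ ∑ i ∈ S, ‖b i - g i‖^2 := Finset.sum_le_sum fun i hi => by
                rw [(Finset.mem_filter.mp hi).2]; exact hPle i c
        set X := ‖∑ i ∈ S, e i‖ with hXdef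
        set Y := ‖c - P c‖ with hYdef
        set N : ℝ := (S.card : ℝ) with hNdef
        have hX0 : 0 ≤ X := norm_nonneg _
        have hY0 : 0 ≤ Y := norm_nonneg _
        have hγN : 0 < γ * N := by positivity
        have hkey2 : 2 * (X*Y) ≤ σ m ^2 / γ + γ * (N * Y^2) := by
          have h1 : 2 * (X*Y) * (γ*N) ≤ X^2 + (γ*N)^2 * Y^2 := by
            nlinarith [sq_nonneg (X - γ*N*Y)]
          have h3 : (σ m ^2/γ + γ*(N*Y^2)) * (γ*N) = σ m ^2 * N + (γ*N)^2*Y^2 := by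
            field_simp
          have h4 : 2 * (X*Y) * (γ*N) ≤ (σ m ^2/γ + γ*(N*Y^2)) * (γ*N) := by
            rw [h3]
            nlinarith
          exact le_of_mul_le_mul_right h4 hγN
        calc 2 * |∑ i ∈ S, ⟪e i, g i⟫| = 2 * |⟪∑ i ∈ S, e i, c - P c⟫| := by rw [hsum]
          _ ≤ 2 * (X*Y) := by
              linarith [hXY, abs_nonneg ⟪∑ i ∈ S, e i, c - P c⟫]
          _ ≤ σ m ^2 / γ + γ * (N * Y^2) := hkey2
          _ ≤ σ m ^2 / γ + γ * ∑ i ∈ S, ‖b i - g i‖^2 := by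
              have := mul_le_mul_of_nonneg_left hY2 (le_of_lt hγ)
              linarith
    calc 2 * |∑ i, ⟪e i, g i⟫|
        = 2 * |∑ c ∈ C', ∑ i ∈ univ.filter (fun i => g i = c), ⟪e i, g i⟫| := by
          rw [hfib]
      _ ≤ 2 * ∑ c ∈ C', |∑ i ∈ univ.filter (fun i => g i = c), ⟪e i, g i⟫| := by
          have := Finset.abs_sum_le_sum_abs
            (fun c => ∑ i ∈ univ.filter (fun i => g i = c), ⟪e i, g i⟫) C'
          linarith
      _ = ∑ c ∈ C', 2 * |∑ i ∈ univ.filter (fun i => g i = c), ⟪e i, g i⟫| := by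
          rw [Finset.mul_sum]
      _ ≤ ∑ c ∈ C', (σ m ^2 / γ + γ * ∑ i ∈ univ.filter (fun i => g i = c), ‖b i - g i‖^2) :=
          Finset.sum_le_sum key
      _ = (C'.card : ℝ) * (σ m ^2 / γ)
            + γ * ∑ c ∈ C', ∑ i ∈ univ.filter (fun i => g i = c), ‖b i - g i‖^2 := by
          rw [Finset.sum_add_distrib, Finset.sum_const, nsmul_eq_mul, ← Finset.mul_sum]
      _ = (k:ℝ) * σ m ^2 / γ + γ * ∑ i, ‖b i - g i‖^2 := by
          rw [hC', hfib]
          ring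
  -- expansion identity
  have hiden : ∀ g : Fin n → EuclideanSpace ℝ (Fin d),
      ∑ i, ‖a i - g i‖^2
        = ∑ i, ‖b i - g i‖^2 + (∑ i, ‖e i‖^2) - 2 * ∑ i, ⟪e i, g i⟫ := by
    intro g
    rw [Finset.mul_sum, ← Finset.sum_add_distrib, ← Finset.sum_sub_distrib]
    refine Finset.sum_congr rfl fun i _ => ?_
    have h1 : a i - g i = (b i - g i) + e i := by rw [hab i]; abel
    rw [h1, norm_add_sq_real]
    have h2 : ⟪b i - g i, e i⟫ = - ⟪e i, g i⟫ := by
      rw [inner_sub_left]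
      rw [show ⟪b i, e i⟫ = (0:ℝ) from (real_inner_comm _ _).trans (hbe i)]
      rw [real_inner_comm (g i) (e i)]
      ring
    rw [h2]
    ring
  -- final assembly
  have hγ0 : 0 < ε/4 := by positivity
  have hγ12 : ε/4 ≤ 1/12 := by linarith
  have hγ1 : 0 < 1 - ε/4 := by linarith
  have hOPT0 : 0 ≤ matDistSq A ↑Cstar := matDistSq_nonneg _ _
  set OPT := matDistSq A ↑Cstar with hOPTdef
  have hceil1 : 1 ≤ ⌈(72 * k : ℝ) / ε ^ 2⌉₊ := by
    rw [Nat.one_le_ceil_iff]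
    have hk1 : (1:ℝ) ≤ (k:ℝ) := by exact_mod_cast hk
    positivity
  have hmk : (m:ℝ) + 1 - k = (⌈(72 * k : ℝ) / ε ^ 2⌉₊ : ℝ) := by
    have h1 : m + 1 = k + ⌈(72 * k : ℝ) / ε ^ 2⌉₊ := by omega
    have h2 : ((m:ℝ) + 1) = (k:ℝ) + (⌈(72 * k : ℝ) / ε ^ 2⌉₊ : ℝ) := by exact_mod_cast h1
    linarith
  have hceil2 : (72 * k : ℝ) / ε ^ 2 ≤ ((m:ℝ) + 1 - k) := by
    rw [hmk]
    exact Nat.le_ceil _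
  have hS0 : 18 * ((k:ℝ) * σ m ^2 / (ε/4)) ≤ ε * OPT := by
    have h1 : σ m ^2 * ((72 * k : ℝ) / ε ^ 2) ≤ OPT :=
      le_trans (mul_le_mul_of_nonneg_left hceil2 (sq_nonneg _)) hOPTlb
    have h2 : 72 * (k:ℝ) * σ m ^2 ≤ ε^2 * OPT := by
      have h3 : ε^2 * (σ m ^2 * ((72 * k : ℝ) / ε ^ 2)) ≤ ε^2 * OPT :=
        mul_le_mul_of_nonneg_left h1 (by positivity)
      have h4 : ε^2 * (σ m ^2 * ((72 * k : ℝ) / ε ^ 2)) = 72 * (k:ℝ) * σ m ^2 := by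
        field_simp
      linarith
    have h5 : 18 * ((k:ℝ) * σ m ^2 / (ε/4)) = 72 * (k:ℝ) * σ m ^2 / ε := by
      field_simp
      ring
    rw [h5, div_le_iff₀ hε0]
    nlinarith
  have hS00 : 0 ≤ (k:ℝ) * σ m ^2 / (ε/4) := by positivity
  have hCne : C.Nonempty := Finset.card_pos.mp (by rw [hC]; omega)
  have hCstarne2 : Cstar.Nonempty := Finset.card_pos.mp (by rw [hCstar]; omega)
  obtain ⟨gS, hgS, hgSeq0⟩ := exists_assignment A Cstar hCstarne2
  have hgSeq : OPT = ∑ i, ‖a i - gS i‖^2 := hgSeq0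
  have hFBs0 : 0 ≤ ∑ i, ‖b i - gS i‖^2 := Finset.sum_nonneg fun i _ => sq_nonneg _
  have hE20 : 0 ≤ ∑ i, ‖e i‖^2 := Finset.sum_nonneg fun i _ => sq_nonneg _
  have hcrossS := hcross Cstar hCstar gS hgS (ε/4) hγ0
  have h_i : (1 - ε/4) * ∑ i, ‖b i - gS i‖^2
      ≤ OPT - (∑ i, ‖e i‖^2) + (k:ℝ) * σ m ^2 / (ε/4) := by
    have hOPTeq : OPT = (∑ i, ‖b i - gS i‖^2) + (∑ i, ‖e i‖^2) - 2 * ∑ i, ⟪e i, gS i⟫ := by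
      rw [hgSeq]
      exact hiden gS
    have habs : ∑ i, ⟪e i, gS i⟫ ≤ |∑ i, ⟪e i, gS i⟫| := le_abs_self _
    nlinarith
  have hBCstar : matDistSq B ↑Cstar ≤ ∑ i, ‖b i - gS i‖^2 :=
    matDistSq_le_assign B Cstar gS hgS
  obtain ⟨g, hg, hgeq0⟩ := exists_assignment B C hCne
  have hgeq : matDistSq B ↑C = ∑ i, ‖b i - g i‖^2 := hgeq0
  have hFBle : ∑ i, ‖b i - g i‖^2 ≤ α * ∑ i, ‖b i - gS i‖^2 := by
    calc ∑ i, ‖b i - g i‖^2 = matDistSq B ↑C := hgeq.symm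
      _ ≤ α * matDistSq B ↑Cstar := happrox Cstar hCstar
      _ ≤ α * ∑ i, ‖b i - gS i‖^2 :=
          mul_le_mul_of_nonneg_left hBCstar (by linarith)
  have hcost : matDistSq A ↑C
      ≤ (1 + ε/4) * (∑ i, ‖b i - g i‖^2) + (∑ i, ‖e i‖^2) + (k:ℝ) * σ m ^2 / (ε/4) := by
    have h1 : matDistSq A ↑C ≤ ∑ i, ‖a i - g i‖^2 := matDistSq_le_assign A C g hg
    have h2 := hiden g
    have h3 := hcross C hC g hg (ε/4) hγ0
    have h4 : -|∑ i, ⟪e i, g i⟫| ≤ ∑ i, ⟪e i, g i⟫ := neg_abs_le _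
    nlinarith
  have hFB0 : 0 ≤ ∑ i, ‖b i - g i‖^2 := Finset.sum_nonneg fun i _ => sq_nonneg _
  have hfin : (1 + ε/4) * (∑ i, ‖b i - g i‖^2) + (∑ i, ‖e i‖^2) + (k:ℝ) * σ m ^2 / (ε/4)
      ≤ α * (1 + ε) * OPT := by
    set S0 := (k:ℝ) * σ m ^2 / (ε/4) with hS0def
    set E2 := ∑ i, ‖e i‖^2 with hE2def
    set FBs := ∑ i, ‖b i - gS i‖^2 with hFBsdef
    set FB := ∑ i, ‖b i - g i‖^2 with hFBdef
    have h5 : (1 - ε/4) * ((1 + ε/4) * FB) ≤ α * (1 + ε/4) * (OPT - E2 + S0) := by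
      have h5a : (1 + ε/4) * FB ≤ (1 + ε/4) * (α * FBs) :=
        mul_le_mul_of_nonneg_left hFBle (by linarith)
      have h5b : (1 - ε/4) * ((1 + ε/4) * (α * FBs))
          = α * (1 + ε/4) * ((1 - ε/4) * FBs) := by ring
      have h5c : α * (1 + ε/4) * ((1 - ε/4) * FBs) ≤ α * (1 + ε/4) * (OPT - E2 + S0) := by
        refine mul_le_mul_of_nonneg_left h_i ?_
        nlinarith
      nlinarith [mul_le_mul_of_nonneg_left h5a (le_of_lt hγ1)]
    have h7 : α * (1 + ε/4) * (OPT - E2 + S0) + (1 - ε/4) * (E2 + S0)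
        ≤ (1 - ε/4) * (α * (1 + ε) * OPT) := by
      have hαS0 : 18 * S0 ≤ ε * OPT := hS0
      have hE2c : (1 - ε/4) * E2 ≤ α * (1 + ε/4) * E2 := by
        have h1 : (1 - ε/4) ≤ α * (1 + ε/4) := by
          nlinarith [mul_nonneg (sub_nonneg.mpr hα) (by linarith : (0:ℝ) ≤ 1 + ε/4)]
        exact mul_le_mul_of_nonneg_right h1 hE20
      have hαOPT : 0 ≤ (α - 1) * OPT := mul_nonneg (by linarith) hOPT0
      have hαS00 : 0 ≤ (α - 1) * S0 := mul_nonneg (by linarith) hS00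
      nlinarith [mul_le_mul_of_nonneg_left hαS0 (by linarith : (0:ℝ) ≤ α),
        mul_nonneg (mul_nonneg (by linarith : (0:ℝ) ≤ α) hε0.le) hS00,
        mul_nonneg hε0.le hOPT0, mul_nonneg (mul_nonneg hε0.le hε0.le) hOPT0,
        mul_le_mul_of_nonneg_left hαS0 hε0.le]
    -- divide by (1 - ε/4)
    have h8 : (1 - ε/4) * ((1 + ε/4) * FB + E2 + S0) ≤ (1 - ε/4) * (α * (1 + ε) * OPT) := by
      nlinarith
    exact le_of_mul_le_mul_left h8 hγ1
  linarith
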